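/- Let 0 < k ≤ π⁴ and β ∈ ℝ. Then there exists ν > 0 such that x² + βx + k ≥ ν·x² for all real x ≥ π², if and only if β > −(π² + k/π²). -/

import Mathlib

open Real

/-- For `0 < k ≤ π⁴`: there is `ν > 0` with `x² + βx + k ≥ ν·x²` for all `x ≥ π²`
iff `β > −(π² + k/π²)`. -/
theorem quadratic_coercive_iff_small_k (k β : ℝ) (hk0 : 0 < k) (hk : k ≤ π^4) :
    (∃ ν > 0, ∀ x : ℝ, π^2 ≤ x → ν * x^2 ≤ x^2 + β * x + k) ↔
      -(π^2 + k / π^2) < β := by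
  have hπ : (0:ℝ) < π := Real.pi_pos
  have hA : (0:ℝ) < π^2 := by positivity
  have hkd : k / π^2 * π^2 = k := div_mul_cancel₀ _ (ne_of_gt hA)
  constructor
  · rintro ⟨ν, hν, h⟩
    have h1 := h (π^2) le_rfl
    have hδ : 0 < (π^2)^2 + β * π^2 + k := lt_of_lt_of_le (by positivity) h1
    nlinarith [hδ, hkd, hA]
  · intro hβ
    have hD : 0 < π^2 + β + k / π^2 := by
      nlinarith [hβ]
    set D : ℝ := π^2 + β + k / π^2 with hDdef
    refine ⟨min (1/4) (D / (2 * π^2)), lt_min (by norm_num) (by positivity), ?_⟩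
    intro x hx
    have hkA : k / π^2 ≤ π^2 := by
      rw [div_le_iff₀ hA]; nlinarith [hk]
    have key : x^2 + β * x + k = (x - π^2) * (x - k / π^2) + D * x := by
      linear_combination -x * hDdef - hkd
    have hmin1 : min (1/4) (D / (2 * π^2)) ≤ 1/4 := min_le_left _ _
    have hmin2 : min (1/4) (D / (2 * π^2)) ≤ D / (2 * π^2) := min_le_right _ _
    have hxpos : 0 < x := lt_of_lt_of_le hA hx
    rcases le_or_gt x (2 * π^2) with hx2 | hx2
    · -- D * x dominates
      have h1 : (x - π^2) * (x - k / π^2) ≥ 0 := by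
        apply mul_nonneg <;> nlinarith [hkA, hx]
      have h2 : min (1/4) (D / (2 * π^2)) * x^2 ≤ D * x := by
        have : D / (2 * π^2) * x ≤ D := by
          rw [div_mul_eq_mul_div, div_le_iff₀ (by positivity)]
          nlinarith [hD, hx2, hxpos]
        calc min (1/4) (D / (2 * π^2)) * x^2 ≤ D / (2 * π^2) * x^2 := mul_le_mul_of_nonneg_right hmin2 (sq_nonneg x)
          _ = D / (2 * π^2) * x * x := by ring
          _ ≤ D * x := mul_le_mul_of_nonneg_right this (le_of_lt hxpos)
      nlinarith [h1, h2, key]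
    · -- quadratic term dominates
      have h1 : x^2 / 4 ≤ (x - π^2) * (x - k / π^2) := by
        nlinarith [hkA, hx2, hA]
      have h2 : 0 ≤ D * x := le_of_lt (mul_pos hD hxpos)
      have h3 : min (1/4) (D / (2 * π^2)) * x^2 ≤ x^2 / 4 := by
        nlinarith [hmin1, sq_nonneg x]
      nlinarith [h1, h2, h3, key]
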